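/- If man m can push up a set X of women below his DA partner without incurring regret, then for every woman w_x ∈ X, pushing up w_x alone also does not cause m to incur regret. -/

import Mathlib

/-- A stable marriage profile: `M m` is man `m`'s ranking of women
(`M m k` = his `k`-th favorite woman), `W w` is woman `w`'s ranking of men. -/
structure Profile (n : ℕ) where
  M : Fin n → (Fin n ≃ Fin n)
  W : Fin n → (Fin n ≃ Fin n)

/-- Man `m` strictly prefers woman `w₁` to woman `w₂`. -/
def Profile.mpref {n : ℕ} (P : Profile n) (m w₁ w₂ : Fin n) : Prop :=
  (P.M m).symm w₁ < (P.M m).symm w₂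

/-- Woman `w` strictly prefers man `m₁` to man `m₂`. -/
def Profile.wpref {n : ℕ} (P : Profile n) (w m₁ m₂ : Fin n) : Prop :=
  (P.W w).symm m₁ < (P.W w).symm m₂

/-- State of the Gale–Shapley (deferred acceptance) algorithm:
`next m` is the rank of the next woman `m` will propose to, `wmatch w` is the man
currently (tentatively) held by woman `w`, `props` records all proposals made so far. -/
structure GSState (n : ℕ) where
  next : Fin n → ℕ
  wmatch : Fin n → Option (Fin n)
  props : List (Fin n × Fin n)

/-- Man `m` is currently not held by any woman. -/
def isUnmatched {n : ℕ} (s : GSState n) (m : Fin n) : Bool :=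
  decide (∀ w, s.wmatch w ≠ some m)

/-- One step of men-proposing deferred acceptance: the first unmatched man
proposes to the next woman on his list; she keeps her favorite proposer so far. -/
def GSstep {n : ℕ} (P : Profile n) (s : GSState n) : GSState n :=
  match (List.finRange n).find? (fun m => isUnmatched s m && decide (s.next m < n)) with
  | none => s
  | some m =>
    if h : s.next m < n then
      let w := P.M m ⟨s.next m, h⟩
      let s' : GSState n :=
        { next := Function.update s.next m (s.next m + 1),
          wmatch := s.wmatch,
          props := (m, w) :: s.props }
      match s.wmatch w with
      | none => { s' with wmatch := Function.update s.wmatch w (some m) }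
      | some m' =>
          if (P.W w).symm m < (P.W w).symm m' then
            { s' with wmatch := Function.update s.wmatch w (some m) }
          else s'
    else s

def GSinit (n : ℕ) : GSState n := ⟨fun _ => 0, fun _ => none, []⟩

/-- Run deferred acceptance to completion (at most `n*n` proposals occur). -/
def GSrun {n : ℕ} (P : Profile n) : GSState n := (GSstep P)^[n * n + 1] (GSinit n)

/-- The men-proposing deferred acceptance matching, as a map from men to women. -/
noncomputable def DA {n : ℕ} (P : Profile n) : Fin n → Fin n :=
  fun m => if h : ∃ w, (GSrun P).wmatch w = some m then h.choose else m

/-- Man `m` proposes to woman `w` during the run of deferred acceptance on `P`. -/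
def Proposes {n : ℕ} (P : Profile n) (m w : Fin n) : Prop :=
  (m, w) ∈ (GSrun P).props

/-- `(m, w)` is a blocking pair for the matching `μ` (men to women) w.r.t. profile `P`. -/
def Blocks {n : ℕ} (P : Profile n) (μ : Fin n → Fin n) (m w : Fin n) : Prop :=
  P.mpref m w (μ m) ∧ ∃ m', μ m' = w ∧ P.wpref w m m'

/-- `μ` is a stable matching with respect to profile `P`. -/
def Stable {n : ℕ} (P : Profile n) (μ : Fin n → Fin n) : Prop :=
  Function.Bijective μ ∧ ∀ m w, ¬ Blocks P μ m w

/-- Replace man `m`'s preference list by `e`. -/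
def Profile.updateM {n : ℕ} (P : Profile n) (m : Fin n) (e : Fin n ≃ Fin n) : Profile n :=
  { P with M := Function.update P.M m e }

/-- Replace woman `w`'s preference list by `e`. -/
def Profile.updateW {n : ℕ} (P : Profile n) (w : Fin n) (e : Fin n ≃ Fin n) : Profile n :=
  { P with W := Function.update P.W w e }

/-- The set of women ranked strictly above `w₀` in the list `e`. -/
def Above {n : ℕ} (e : Fin n ≃ Fin n) (w₀ : Fin n) : Set (Fin n) :=
  {w | e.symm w < e.symm w₀}

/-- The set of women ranked strictly below `w₀` in the list `e`. -/
def Below {n : ℕ} (e : Fin n ≃ Fin n) (w₀ : Fin n) : Set (Fin n) :=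
  {w | e.symm w₀ < e.symm w}

/-- `e'` is obtained from man `m`'s true list by pushing up the set `X` and pushing
down the set `Y` around the pivot `DA P m` (the order of women above and below
the pivot is immaterial, cf. Proposition 2 of the paper). -/
def PushUpDown {n : ℕ} (P : Profile n) (m : Fin n) (X Y : Set (Fin n))
    (e' : Fin n ≃ Fin n) : Prop :=
  Above e' (DA P m) = (Above (P.M m) (DA P m) ∪ X) \ Y

/-- `e'` is obtained from `m`'s true list by pushing up the set `X` above `DA P m`. -/
def PushUp {n : ℕ} (P : Profile n) (m : Fin n) (X : Set (Fin n))
    (e' : Fin n ≃ Fin n) : Prop :=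
  PushUpDown P m X ∅ e'

/-- `e'` is obtained from `m`'s true list by pushing down the set `Y` below `DA P m`. -/
def PushDown {n : ℕ} (P : Profile n) (m : Fin n) (Y : Set (Fin n))
    (e' : Fin n ≃ Fin n) : Prop :=
  PushUpDown P m ∅ Y e'

/-- Woman `w` is ranked below `DA P m` in `m`'s true list, and pushing her up
individually leaves `m`'s deferred acceptance partner unchanged (no regret). -/
def NoRegretWoman {n : ℕ} (P : Profile n) (m w : Fin n) : Prop :=
  w ∈ Below (P.M m) (DA P m) ∧
    ∀ e' : Fin n ≃ Fin n, PushUp P m {w} e' → DA (P.updateM m e') m = DA P m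

/-- The no-regret set `W^NR` of accomplice `m`. -/
def WNR {n : ℕ} (P : Profile n) (m : Fin n) : Set (Fin n) :=
  {w | NoRegretWoman P m w}

namespace StableAux

variable {n : ℕ}

/-- rank of woman `b` on man `a`'s list, as a natural number -/
def rkM (Q : Profile n) (a b : Fin n) : ℕ := ((Q.M a).symm b : ℕ)

lemma mpref_iff (Q : Profile n) (a b c : Fin n) :
    Q.mpref a b c ↔ rkM Q a b < rkM Q a c := Iff.rfl

lemma rkM_inj (Q : Profile n) {a b c : Fin n} (h : rkM Q a b = rkM Q a c) : b = c :=
  (Q.M a).symm.injective (Fin.val_injective h)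

lemma wpref_total (Q : Profile n) {w a b : Fin n} (hab : a ≠ b) :
    Q.wpref w a b ∨ Q.wpref w b a := by
  rcases lt_or_gt_of_ne (fun h => hab ((Q.W w).symm.injective h)) with h | h
  · exact Or.inl h
  · exact Or.inr h

lemma wpref_trans (Q : Profile n) {w a b c : Fin n}
    (h1 : Q.wpref w a b) (h2 : Q.wpref w b c) : Q.wpref w a c := lt_trans h1 h2

lemma wpref_irrefl (Q : Profile n) {w a : Fin n} (h : Q.wpref w a a) : False :=
  lt_irrefl _ h

def picks (s : GSState n) : Option (Fin n) :=
  (List.finRange n).find? (fun m => isUnmatched s m && decide (s.next m < n))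

lemma GSstep_none (Q : Profile n) (s : GSState n) (hf : picks s = none) :
    GSstep Q s = s := by
  unfold GSstep
  unfold picks at hf
  rw [hf]

/-- anatomy of a productive GS step: `a` proposed to `b`. -/
structure StepAdd (Q : Profile n) (s t : GSState n) (a b : Fin n) : Prop where
  hlt : s.next a < n
  hb : rkM Q a b = s.next a
  unmatched : ∀ w, s.wmatch w ≠ some a
  next_eq : t.next = Function.update s.next a (s.next a + 1)
  props_eq : t.props = (a, b) :: s.props
  outcome : (t.wmatch = Function.update s.wmatch b (some a) ∧
              (∀ c, s.wmatch b = some c → Q.wpref b a c)) ∨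
            (∃ c, s.wmatch b = some c ∧ t.wmatch = s.wmatch ∧ ¬ Q.wpref b a c ∧ c ≠ a)

lemma step_cases (Q : Profile n) (s : GSState n) :
    (picks s = none ∧ GSstep Q s = s) ∨ ∃ a b, StepAdd Q s (GSstep Q s) a b := by
  cases hf : picks s with
  | none => exact Or.inl ⟨rfl, GSstep_none Q s hf⟩
  | some a =>
    have hp := List.find?_some hf
    simp only [Bool.and_eq_true, decide_eq_true_eq, isUnmatched] at hp
    obtain ⟨hu, h⟩ := hp
    have hstep : GSstep Q s =
        (match s.wmatch (Q.M a ⟨s.next a, h⟩) with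
         | none =>
            { next := Function.update s.next a (s.next a + 1),
              wmatch := Function.update s.wmatch (Q.M a ⟨s.next a, h⟩) (some a),
              props := (a, Q.M a ⟨s.next a, h⟩) :: s.props }
         | some m' =>
            if (Q.W (Q.M a ⟨s.next a, h⟩)).symm a < (Q.W (Q.M a ⟨s.next a, h⟩)).symm m' then
              { next := Function.update s.next a (s.next a + 1),
                wmatch := Function.update s.wmatch (Q.M a ⟨s.next a, h⟩) (some a),
                props := (a, Q.M a ⟨s.next a, h⟩) :: s.props }
            else
              { next := Function.update s.next a (s.next a + 1),
                wmatch := s.wmatch,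
                props := (a, Q.M a ⟨s.next a, h⟩) :: s.props }) := by
      unfold GSstep
      unfold picks at hf
      rw [hf]
      conv_lhs => whnf
      rw [Subsingleton.elim ((s.next a).decLt n) (isTrue h)]
    set w := Q.M a ⟨s.next a, h⟩ with hw
    have hrk : rkM Q a w = s.next a := by
      simp [rkM, hw]
    refine Or.inr ⟨a, w, ?_⟩
    cases hm : s.wmatch w with
    | none =>
      rw [hm] at hstep
      have hstep2 : GSstep Q s =
          { next := Function.update s.next a (s.next a + 1),
            wmatch := Function.update s.wmatch w (some a),
            props := (a, w) :: s.props } := by rw [hstep]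
      exact { hlt := h, hb := hrk, unmatched := hu,
              next_eq := by rw [hstep2],
              props_eq := by rw [hstep2],
              outcome := Or.inl ⟨by rw [hstep2], by intro c hc; rw [hm] at hc; cases hc⟩ }
    | some c =>
      rw [hm] at hstep
      by_cases hcomp : (Q.W w).symm a < (Q.W w).symm c
      · have hstep2 : GSstep Q s =
            { next := Function.update s.next a (s.next a + 1),
              wmatch := Function.update s.wmatch w (some a),
              props := (a, w) :: s.props } := by rw [hstep]; exact if_pos hcomp
        exact { hlt := h, hb := hrk, unmatched := hu,
                next_eq := by rw [hstep2],
                props_eq := by rw [hstep2],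
                outcome := Or.inl ⟨by rw [hstep2], by
                  intro c' hc'; rw [hm] at hc'; cases hc'; exact hcomp⟩ }
      · have hstep2 : GSstep Q s =
            { next := Function.update s.next a (s.next a + 1),
              wmatch := s.wmatch,
              props := (a, w) :: s.props } := by rw [hstep]; exact if_neg hcomp
        exact { hlt := h, hb := hrk, unmatched := hu,
                next_eq := by rw [hstep2],
                props_eq := by rw [hstep2],
                outcome := Or.inr ⟨c, hm, by rw [hstep2], hcomp,
                  fun hca => hu w (hca ▸ hm)⟩ }

/-- The basic Gale–Shapley invariant. -/
structure Inv (Q : Profile n) (s : GSState n) : Prop where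
  next_le : ∀ a, s.next a ≤ n
  mem_props : ∀ a b, ((a, b) ∈ s.props ↔ rkM Q a b < s.next a)
  holder_rank : ∀ b a, s.wmatch b = some a → rkM Q a b + 1 = s.next a
  holder_best : ∀ a b, (a, b) ∈ s.props →
    ∃ c, s.wmatch b = some c ∧ (c = a ∨ Q.wpref b c a)

lemma Inv.functional {Q : Profile n} {s : GSState n} (hI : Inv Q s) {b b' a : Fin n}
    (h : s.wmatch b = some a) (h' : s.wmatch b' = some a) : b = b' := by
  have h1 := hI.holder_rank b a h
  have h2 := hI.holder_rank b' a h'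
  exact rkM_inj Q (show rkM Q a b = rkM Q a b' by omega)

lemma Inv.holder_mem {Q : Profile n} {s : GSState n} (hI : Inv Q s) {b a : Fin n}
    (h : s.wmatch b = some a) : (a, b) ∈ s.props := by
  rw [hI.mem_props]
  have := hI.holder_rank b a h
  omega

lemma Inv_init (Q : Profile n) : Inv Q (GSinit n) where
  next_le := fun _ => Nat.zero_le n
  mem_props := fun a b => by simp [GSinit]
  holder_rank := fun b a h => by simp [GSinit] at h
  holder_best := fun a b h => by simp [GSinit] at h

lemma Inv_step {Q : Profile n} {s : GSState n} (hI : Inv Q s) : Inv Q (GSstep Q s) := by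
  rcases step_cases Q s with ⟨-, heq⟩ | ⟨a, b, hS⟩
  · rw [heq]; exact hI
  set t := GSstep Q s with ht
  have hbmem : (a, b) ∉ s.props := by
    rw [hI.mem_props, hS.hb]; omega
  refine { next_le := ?_, mem_props := ?_, holder_rank := ?_, holder_best := ?_ }
  · intro x
    rw [hS.next_eq]
    rcases eq_or_ne x a with rfl | hxa
    · rw [Function.update_self]; exact hS.hlt
    · rw [Function.update_of_ne hxa]; exact hI.next_le x
  · intro x y
    rw [hS.props_eq, hS.next_eq]
    rcases eq_or_ne x a with rfl | hxa
    · rw [Function.update_self]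
      constructor
      · intro hmem
        rcases List.mem_cons.mp hmem with heq | hmem'
        · injection heq with h1 h2
          have hb := hS.hb
          subst h2
          omega
        · have := (hI.mem_props x y).mp hmem'; omega
      · intro hlt
        rcases Nat.lt_succ_iff_lt_or_eq.mp hlt with hlt' | heq'
        · exact List.mem_cons_of_mem _ ((hI.mem_props x y).mpr hlt')
        · have : y = b := rkM_inj Q (heq'.trans hS.hb.symm)
          rw [this]; exact List.mem_cons_self
    · rw [Function.update_of_ne hxa]
      constructor
      · intro hmem
        rcases List.mem_cons.mp hmem with heq | hmem'
        · exact absurd (congrArg Prod.fst heq) (by simpa using hxa)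
        · exact (hI.mem_props x y).mp hmem'
      · intro hlt
        exact List.mem_cons_of_mem _ ((hI.mem_props x y).mpr hlt)
  · intro y c hy
    rw [hS.next_eq]
    rcases hS.outcome with ⟨hw, -⟩ | ⟨c', -, hw, -, -⟩
    · rw [hw] at hy
      rcases eq_or_ne y b with rfl | hyb
      · rw [Function.update_self] at hy
        have hac : a = c := by injection hy
        subst hac
        rw [Function.update_self, hS.hb]
      · rw [Function.update_of_ne hyb] at hy
        have hca : c ≠ a := fun h => hS.unmatched y (h ▸ hy)
        rw [Function.update_of_ne hca]
        exact hI.holder_rank y c hy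
    · rw [hw] at hy
      have hca : c ≠ a := fun h => hS.unmatched y (h ▸ hy)
      rw [Function.update_of_ne hca]
      exact hI.holder_rank y c hy
  · intro x y hxy
    rw [hS.props_eq] at hxy
    rcases hS.outcome with ⟨hw, hbetter⟩ | ⟨c', hc', hw, hnc, hne⟩
    · rw [hw]
      rcases List.mem_cons.mp hxy with heq | hmem'
      · obtain ⟨h1, h2⟩ := Prod.mk.inj heq
        subst h1; subst h2
        exact ⟨x, by rw [Function.update_self], Or.inl rfl⟩
      · rcases eq_or_ne y b with rfl | hyb
        · obtain ⟨c, hc, hcx⟩ := hI.holder_best x y hmem'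
          refine ⟨a, by rw [Function.update_self], Or.inr ?_⟩
          have hax := hbetter c hc
          rcases hcx with rfl | hcx
          · exact hax
          · exact wpref_trans Q hax hcx
        · obtain ⟨c, hc, hcx⟩ := hI.holder_best x y hmem'
          exact ⟨c, by rw [Function.update_of_ne hyb]; exact hc, hcx⟩
    · rw [hw]
      rcases List.mem_cons.mp hxy with heq | hmem'
      · obtain ⟨h1, h2⟩ := Prod.mk.inj heq
        subst h1; subst h2
        refine ⟨c', hc', Or.inr ?_⟩
        rcases wpref_total Q hne with h | h
        · exact h
        · exact absurd h hnc
      · exact hI.holder_best x y hmem'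

/-! ### The iterated run -/

def st (Q : Profile n) (k : ℕ) : GSState n := (GSstep Q)^[k] (GSinit n)

lemma st_succ (Q : Profile n) (k : ℕ) : st Q (k + 1) = GSstep Q (st Q k) := by
  unfold st
  rw [Function.iterate_succ_apply']

lemma Inv_st (Q : Profile n) (k : ℕ) : Inv Q (st Q k) := by
  induction k with
  | zero => exact Inv_init Q
  | succ k ih => rw [st_succ]; exact Inv_step ih

lemma st_cases (Q : Profile n) (k : ℕ) :
    (picks (st Q k) = none ∧ st Q (k + 1) = st Q k) ∨
    ∃ a b, StepAdd Q (st Q k) (st Q (k + 1)) a b := by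
  rw [st_succ]
  exact step_cases Q (st Q k)

lemma st_fixed (Q : Profile n) {j : ℕ} (h : picks (st Q j) = none) :
    ∀ k, j ≤ k → st Q k = st Q j := by
  intro k hk
  induction k with
  | zero => cases Nat.le_zero.mp hk; rfl
  | succ k ih =>
    rcases Nat.lt_or_ge j (k+1) with hlt | hge
    · have hk' : j ≤ k := Nat.lt_succ_iff.mp hlt
      rw [st_succ, ih hk', GSstep_none Q _ h]
    · have hj : j = k + 1 := le_antisymm hk hge
      rw [hj]

def pot (s : GSState n) : ℕ := ∑ a : Fin n, s.next a

lemma pot_step {Q : Profile n} {s t : GSState n} {a b : Fin n} (hS : StepAdd Q s t a b) :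
    pot t = pot s + 1 := by
  unfold pot
  rw [hS.next_eq]
  rw [Finset.sum_update_of_mem (Finset.mem_univ a)]
  rw [Finset.sum_eq_sum_sdiff_singleton_add (Finset.mem_univ a) s.next]
  omega

lemma picks_run (Q : Profile n) : picks (st Q (n * n + 1)) = none := by
  by_contra hne
  have hall : ∀ j, j ≤ n * n + 1 → picks (st Q j) ≠ none := by
    intro j hj hnone
    exact hne (by rw [st_fixed Q hnone _ hj]; exact hnone)
  have hpot : ∀ j, j ≤ n * n + 1 → pot (st Q j) = j := by
    intro j hj
    induction j with
    | zero =>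
      simp [pot, st, GSinit]
    | succ j ih =>
      have hj' : j ≤ n * n + 1 := Nat.le_of_succ_le hj
      rcases st_cases Q j with ⟨hnone, -⟩ | ⟨a, b, hS⟩
      · exact absurd hnone (hall j hj')
      · rw [pot_step hS, ih hj']
  have hle : pot (st Q (n * n + 1)) ≤ n * n := by
    unfold pot
    calc ∑ a : Fin n, (st Q (n * n + 1)).next a ≤ ∑ _a : Fin n, n :=
          Finset.sum_le_sum (fun a _ => (Inv_st Q (n * n + 1)).next_le a)
      _ = n * n := by simp [Finset.sum_const, mul_comm]
  rw [hpot _ le_rfl] at hle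
  omega

lemma GSrun_eq_st (Q : Profile n) : GSrun Q = st Q (n * n + 1) := rfl

lemma Inv_run (Q : Profile n) : Inv Q (GSrun Q) := Inv_st Q (n * n + 1)

/-- every man is matched at the end of the run -/
lemma run_matched (Q : Profile n) (a : Fin n) : ∃ b, (GSrun Q).wmatch b = some a := by
  classical
  by_contra hun
  push_neg at hun
  have hI : Inv Q (GSrun Q) := Inv_run Q
  have hnone : picks (GSrun Q) = none := picks_run Q
  have hfa : ∀ x ∈ List.finRange n,
      ¬(isUnmatched (GSrun Q) x && decide ((GSrun Q).next x < n)) = true := by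
    rw [← List.find?_eq_none]
    exact hnone
  have hnx : (GSrun Q).next a = n := by
    have h1 := hfa a (List.mem_finRange a)
    simp only [Bool.and_eq_true, decide_eq_true_eq, isUnmatched, not_and] at h1
    have h2 := h1 (fun w => hun w)
    have h3 := hI.next_le a
    omega
  have hmatched : ∀ b : Fin n, ∃ c, (GSrun Q).wmatch b = some c := by
    intro b
    have hmem : (a, b) ∈ (GSrun Q).props := by
      rw [hI.mem_props, hnx]
      exact (((Q.M a).symm b)).isLt
    obtain ⟨c, hc, -⟩ := hI.holder_best a b hmem
    exact ⟨c, hc⟩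
  set g : Fin n → Fin n := fun b => (hmatched b).choose with hg
  have hgspec : ∀ b, (GSrun Q).wmatch b = some (g b) := fun b => (hmatched b).choose_spec
  have hginj : Function.Injective g := by
    intro b b' hbb
    exact hI.functional (hgspec b) (hbb ▸ hgspec b')
  obtain ⟨b, hb⟩ := (Finite.injective_iff_surjective.mp hginj) a
  exact hun b (hb ▸ hgspec b)

lemma DA_spec (Q : Profile n) (a : Fin n) : (GSrun Q).wmatch (DA Q a) = some a := by
  unfold DA
  rw [dif_pos (run_matched Q a)]
  exact (run_matched Q a).choose_spec

lemma DA_eq (Q : Profile n) {a b : Fin n} (h : (GSrun Q).wmatch b = some a) : DA Q a = b :=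
  (Inv_run Q).functional (DA_spec Q a) h

lemma DA_inj (Q : Profile n) : Function.Injective (DA Q) := by
  intro a a' h
  have h1 := DA_spec Q a
  have h2 := DA_spec Q a'
  rw [h] at h1
  rw [h1] at h2
  injection h2

lemma DA_bij (Q : Profile n) : Function.Bijective (DA Q) :=
  Finite.injective_iff_bijective.mp (DA_inj Q)

lemma next_run (Q : Profile n) (a : Fin n) :
    (GSrun Q).next a = rkM Q a (DA Q a) + 1 :=
  ((Inv_run Q).holder_rank _ a (DA_spec Q a)).symm

lemma stable_DA (Q : Profile n) : Stable Q (DA Q) := by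
  refine ⟨DA_bij Q, fun a w hb => ?_⟩
  obtain ⟨hm, m', hm', hw⟩ := hb
  have hI := Inv_run Q
  have hmem : (a, w) ∈ (GSrun Q).props := by
    rw [hI.mem_props, next_run]
    rw [mpref_iff] at hm
    omega
  obtain ⟨c, hc, hcx⟩ := hI.holder_best a w hmem
  have hcm : m' = c := DA_inj Q (hm'.trans (DA_eq Q hc).symm)
  subst hcm
  rcases hcx with hca | hcx
  · subst hca
    rw [hm'] at hm
    exact lt_irrefl _ hm
  · exact absurd hw (lt_asymm hcx)

/-! ### Man-optimality: no woman ever rejects a stable partner -/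

def RejInv (Q : Profile n) (μ' : Fin n → Fin n) (s : GSState n) : Prop :=
  ∀ a b, (a, b) ∈ s.props → s.wmatch b ≠ some a → μ' a ≠ b

lemma RejInv_step {Q : Profile n} {μ' : Fin n → Fin n} (hst : Stable Q μ')
    {s : GSState n} (hI : Inv Q s) (hR : RejInv Q μ' s) : RejInv Q μ' (GSstep Q s) := by
  obtain ⟨hbij, hnb⟩ := hst
  rcases step_cases Q s with ⟨-, heq⟩ | ⟨a, b, hS⟩
  · rw [heq]; exact hR
  have hprev : ∀ y, rkM Q a y < s.next a → μ' a ≠ y := by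
    intro y hy
    exact hR a y ((hI.mem_props a y).mpr hy) (fun hm => hS.unmatched y hm)
  have hworse : μ' a ≠ b → rkM Q a b < rkM Q a (μ' a) := by
    intro hne
    have h1 : ¬ rkM Q a (μ' a) < s.next a := fun h => hprev _ h rfl
    have h2 : rkM Q a (μ' a) ≠ rkM Q a b := fun h => hne (rkM_inj Q h)
    have hb := hS.hb
    omega
  intro x y hxy hym
  rw [hS.props_eq] at hxy
  rcases hS.outcome with ⟨hw, hbetter⟩ | ⟨c, hc, hw, hnc, hcne⟩
  · -- accept case
    rw [hw] at hym
    rcases List.mem_cons.mp hxy with heq | hmem'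
    · obtain ⟨h1, h2⟩ := Prod.mk.inj heq
      subst h1; subst h2
      rw [Function.update_self] at hym
      exact absurd rfl hym
    · rcases eq_or_ne y b with rfl | hyb
      · rw [Function.update_self] at hym
        have hxa : x ≠ a := fun h => hym (by rw [h])
        rcases eq_or_ne (s.wmatch y) (some x) with hwx | hwx
        · -- x was displaced by a
          intro hxb
          have hmua : μ' a ≠ y := fun h => hxa (hbij.injective (h.trans hxb.symm)).symm
          have hblock : Blocks Q μ' a y :=
            ⟨(mpref_iff Q a y (μ' a)).mpr (hworse hmua), x, hxb, hbetter x hwx⟩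
          exact hnb a y hblock
        · exact hR x y hmem' hwx
      · rw [Function.update_of_ne hyb] at hym
        exact hR x y hmem' hym
  · -- reject case
    rw [hw] at hym
    rcases List.mem_cons.mp hxy with heq | hmem'
    · obtain ⟨h1, h2⟩ := Prod.mk.inj heq
      subst h1; subst h2
      intro hxb
      have hcb : μ' c ≠ y := fun h => hcne (hbij.injective (h.trans hxb.symm))
      have hcprev : ∀ z, rkM Q c z < rkM Q c y → μ' c ≠ z := by
        intro z hz
        have hnextc : rkM Q c y + 1 = s.next c := hI.holder_rank y c hc
        have hmem : (c, z) ∈ s.props := (hI.mem_props c z).mpr (by omega)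
        refine hR c z hmem ?_
        intro hwz
        have hzy : z = y := hI.functional hwz hc
        exact absurd (hzy ▸ hz) (lt_irrefl _)
      have hcworse : rkM Q c y < rkM Q c (μ' c) := by
        have h1 : ¬ rkM Q c (μ' c) < rkM Q c y := fun h => hcprev _ h rfl
        have h2 : rkM Q c (μ' c) ≠ rkM Q c y := fun h => hcb (rkM_inj Q h)
        omega
      have hwca : Q.wpref y c x := by
        rcases wpref_total Q hcne with h | h
        · exact h
        · exact absurd h hnc
      exact hnb c y ⟨(mpref_iff Q c y (μ' c)).mpr hcworse, x, hxb, hwca⟩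
    · exact hR x y hmem' hym

lemma RejInv_run (Q : Profile n) {μ' : Fin n → Fin n} (hst : Stable Q μ') :
    RejInv Q μ' (GSrun Q) := by
  rw [GSrun_eq_st]
  have : ∀ k, RejInv Q μ' (st Q k) := by
    intro k
    induction k with
    | zero => intro a b hab; simp [st, GSinit] at hab
    | succ k ih => rw [st_succ]; exact RejInv_step hst (Inv_st Q k) ih
  exact this _

/-- Man-optimality of deferred acceptance. -/
lemma DA_optimal (Q : Profile n) {μ' : Fin n → Fin n} (hst : Stable Q μ') (a : Fin n) :
    rkM Q a (DA Q a) ≤ rkM Q a (μ' a) := by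
  by_contra hlt
  push_neg at hlt
  have hI := Inv_run Q
  have hmem : (a, μ' a) ∈ (GSrun Q).props := by
    rw [hI.mem_props, next_run]
    omega
  have hwm : (GSrun Q).wmatch (μ' a) ≠ some a := by
    intro h
    have hda := DA_eq Q h
    rw [hda] at hlt
    exact lt_irrefl _ hlt
  exact RejInv_run Q hst a (μ' a) hmem hwm rfl

/-! ### Temporal lemmas -/

lemma next_mono (Q : Profile n) {j k : ℕ} (h : j ≤ k) (a : Fin n) :
    (st Q j).next a ≤ (st Q k).next a := by
  induction k with
  | zero => cases Nat.le_zero.mp h; exact le_rfl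
  | succ k ih =>
    rcases Nat.lt_or_ge j (k+1) with hlt | hge
    · have hjk := Nat.lt_succ_iff.mp hlt
      refine le_trans (ih hjk) ?_
      rcases st_cases Q k with ⟨-, heq⟩ | ⟨a', b', hS⟩
      · rw [heq]
      · rw [hS.next_eq]
        rcases eq_or_ne a a' with rfl | hne
        · rw [Function.update_self]; omega
        · rw [Function.update_of_ne hne]
    · have : j = k + 1 := le_antisymm h hge
      rw [this]

lemma props_mono (Q : Profile n) {j k : ℕ} (h : j ≤ k) {p : Fin n × Fin n}
    (hp : p ∈ (st Q j).props) : p ∈ (st Q k).props := by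
  induction k with
  | zero => cases Nat.le_zero.mp h; exact hp
  | succ k ih =>
    rcases Nat.lt_or_ge j (k+1) with hlt | hge
    · have hjk := Nat.lt_succ_iff.mp hlt
      rcases st_cases Q k with ⟨-, heq⟩ | ⟨a', b', hS⟩
      · rw [heq]; exact ih hjk
      · rw [hS.props_eq]; exact List.mem_cons_of_mem _ (ih hjk)
    · have : j = k + 1 := le_antisymm h hge
      rw [← this]; exact hp

lemma match_mono (Q : Profile n) {j k : ℕ} (h : j ≤ k) {b c : Fin n}
    (hm : (st Q j).wmatch b = some c) :
    ∃ c', (st Q k).wmatch b = some c' ∧ (c' = c ∨ Q.wpref b c' c) := by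
  induction k with
  | zero => cases Nat.le_zero.mp h; exact ⟨c, hm, Or.inl rfl⟩
  | succ k ih =>
    rcases Nat.lt_or_ge j (k+1) with hlt | hge
    · have hjk := Nat.lt_succ_iff.mp hlt
      obtain ⟨c', hc', hrel⟩ := ih hjk
      rcases st_cases Q k with ⟨-, heq⟩ | ⟨a', b', hS⟩
      · exact ⟨c', by rw [heq]; exact hc', hrel⟩
      · rcases hS.outcome with ⟨hw, hbetter⟩ | ⟨c'', hc'', hw, -, -⟩
        · rcases eq_or_ne b b' with rfl | hbb
          · refine ⟨a', by rw [hw, Function.update_self], Or.inr ?_⟩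
            have := hbetter c' hc'
            rcases hrel with rfl | hrel
            · exact this
            · exact wpref_trans Q this hrel
          · exact ⟨c', by rw [hw, Function.update_of_ne hbb]; exact hc', hrel⟩
        · exact ⟨c', by rw [hw]; exact hc', hrel⟩
    · have : j = k + 1 := le_antisymm h hge
      rw [← this]; exact ⟨c, hm, Or.inl rfl⟩

lemma reject_persist (Q : Profile n) {j k : ℕ} (h : j ≤ k) {a b : Fin n}
    (hp : (a, b) ∈ (st Q j).props) (hr : (st Q j).wmatch b ≠ some a) :
    (st Q k).wmatch b ≠ some a := by
  induction k with
  | zero => cases Nat.le_zero.mp h; exact hr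
  | succ k ih =>
    rcases Nat.lt_or_ge j (k+1) with hlt | hge
    · have hjk := Nat.lt_succ_iff.mp hlt
      have ihk := ih hjk
      rcases st_cases Q k with ⟨-, heq⟩ | ⟨a', b', hS⟩
      · rw [heq]; exact ihk
      · have hpk : (a, b) ∈ (st Q k).props := props_mono Q hjk hp
        rcases hS.outcome with ⟨hw, -⟩ | ⟨c'', -, hw, -, -⟩
        · rcases eq_or_ne b b' with rfl | hbb
          · rw [hw, Function.update_self]
            intro hsome
            have haa : a' = a := by injection hsome
            subst haa
            have : rkM Q a' b < (st Q k).next a' := ((Inv_st Q k).mem_props a' b).mp hpk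
            rw [hS.hb] at this
            exact lt_irrefl _ this
          · rw [hw, Function.update_of_ne hbb]; exact ihk
        · rw [hw]; exact ihk
    · have : j = k + 1 := le_antisymm h hge
      rw [← this]; exact hr

lemma event_exists (Q : Profile n) {K : ℕ} {p : Fin n × Fin n} (h : p ∈ (st Q K).props) :
    ∃ t, t < K ∧ p ∉ (st Q t).props ∧ p ∈ (st Q (t + 1)).props := by
  induction K with
  | zero => simp [st, GSinit] at h
  | succ K ih =>
    by_cases hK : p ∈ (st Q K).props
    · obtain ⟨t, ht, h1, h2⟩ := ih hK
      exact ⟨t, Nat.lt_succ_of_lt ht, h1, h2⟩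
    · exact ⟨K, Nat.lt_succ_self K, hK, h⟩

lemma event_anatomy (Q : Profile n) {t : ℕ} {a b : Fin n}
    (h1 : (a, b) ∉ (st Q t).props) (h2 : (a, b) ∈ (st Q (t + 1)).props) :
    StepAdd Q (st Q t) (st Q (t + 1)) a b := by
  rcases st_cases Q t with ⟨-, heq⟩ | ⟨a', b', hS⟩
  · rw [heq] at h2; exact absurd h2 h1
  · have : (a, b) = (a', b') := by
      rw [hS.props_eq] at h2
      rcases List.mem_cons.mp h2 with heq | hmem
      · exact heq
      · exact absurd hmem h1
    obtain ⟨ha, hb⟩ := Prod.mk.inj this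
    subst ha; subst hb
    exact hS

lemma event_unique (Q : Profile n) {t : ℕ} {a b a' b' : Fin n}
    (hS : StepAdd Q (st Q t) (st Q (t + 1)) a b)
    (h1 : (a', b') ∉ (st Q t).props) (h2 : (a', b') ∈ (st Q (t + 1)).props) :
    a' = a ∧ b' = b := by
  rw [hS.props_eq] at h2
  rcases List.mem_cons.mp h2 with heq | hmem
  · exact Prod.mk.inj heq
  · exact absurd hmem h1

/-! ### The blocking lemma -/

theorem blocking_lemma (Q : Profile n) (ν : Fin n → Fin n) (hν : Function.Injective ν)
    (hne : {a | Q.mpref a (ν a) (DA Q a)}.Nonempty) :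
    ∃ m1 w0, ¬ Q.mpref m1 (ν m1) (DA Q m1) ∧ Blocks Q ν m1 w0 := by
  classical
  set μ := DA Q with hμ
  set M' : Set (Fin n) := {a | Q.mpref a (ν a) (μ a)} with hM'
  have hμinj : Function.Injective μ := DA_inj Q
  by_cases hsub : ν '' M' ⊆ μ '' M'
  · -- Case 2 : temporal argument
    have heq : ν '' M' = μ '' M' := by
      refine Set.eq_of_subset_of_ncard_le hsub ?_ (Set.toFinite _)
      rw [Set.ncard_image_of_injective M' hμinj, Set.ncard_image_of_injective M' hν]
    set K := n * n + 1 with hK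
    have hrunK : GSrun Q = st Q K := rfl
    have hIK := Inv_st Q K
    have hfinal : ∀ x : Fin n, (st Q K).wmatch (μ x) = some x := fun x => DA_spec Q x
    have hnextK : ∀ x : Fin n, (st Q K).next x = rkM Q x (μ x) + 1 := fun x => next_run Q x
    have hstK1 : st Q (K + 1) = st Q K := st_fixed Q (picks_run Q) (K + 1) (Nat.le_succ K)
    have hMrk : ∀ x ∈ M', rkM Q x (ν x) < rkM Q x (μ x) := by
      intro x hx
      exact (mpref_iff Q x (ν x) (μ x)).mp hx
    have hpropμ : ∀ x : Fin n, (x, μ x) ∈ (st Q K).props := by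
      intro x
      rw [hIK.mem_props, hnextK]
      omega
    have hpropν : ∀ x ∈ M', (x, ν x) ∈ (st Q K).props := by
      intro x hx
      rw [hIK.mem_props, hnextK]
      have := hMrk x hx
      omega
    set E : ℕ → Prop := fun t => ∃ a b : Fin n, a ∈ M' ∧ b ∈ μ '' M' ∧
      (a, b) ∉ (st Q t).props ∧ (a, b) ∈ (st Q (t + 1)).props with hE
    -- any proposal of an M'-man to a (μ '' M')-woman yields an event time ≤ findGreatest E K
    obtain ⟨mz, hmz⟩ := hne
    obtain ⟨tz, htzK, htz1, htz2⟩ := event_exists Q (hpropμ mz)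
    have hEtz : E tz := ⟨mz, μ mz, hmz, ⟨mz, hmz, rfl⟩, htz1, htz2⟩
    set ks := Nat.findGreatest E K with hks
    have hEk : E ks := Nat.findGreatest_spec (Nat.le_of_lt htzK) hEtz
    have hlast : ∀ t, ks < t → t ≤ K → ¬ E t := fun t h1 h2 => Nat.findGreatest_is_greatest h1 h2
    obtain ⟨m₀, w₀, hm₀M, hw₀W, hnp, hp⟩ := hEk
    have hSk := event_anatomy Q hnp hp
    have hkslt : ks < K := by
      rcases lt_or_eq_of_le (Nat.findGreatest_le (P := E) K) with h | h
      · exact h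
      · exfalso
        rw [← hks] at h  -- ks = K
        rw [h, hstK1] at hp
        rw [h] at hnp
        exact hnp hp
    have hevent_le : ∀ (x y : Fin n) (t : ℕ), x ∈ M' → y ∈ μ '' M' →
        (x, y) ∉ (st Q t).props → (x, y) ∈ (st Q (t + 1)).props → t < K → t ≤ ks := by
      intro x y t hx hy h1 h2 htK
      by_contra hgt
      exact hlast t (Nat.lt_of_not_le hgt) (Nat.le_of_lt htK) ⟨x, y, hx, hy, h1, h2⟩
    -- step (5) : w₀ = μ m₀
    have hw₀ : w₀ = μ m₀ := by
      by_contra hne'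
      have hpK : (m₀, w₀) ∈ (st Q K).props :=
        props_mono Q (Nat.succ_le_of_lt hkslt) hp
      have hle : rkM Q m₀ w₀ < (st Q K).next m₀ := (hIK.mem_props m₀ w₀).mp hpK
      rw [hnextK] at hle
      have hrkne : rkM Q m₀ w₀ ≠ rkM Q m₀ (μ m₀) := fun h => hne' (rkM_inj Q h)
      have hrklt : rkM Q m₀ w₀ < rkM Q m₀ (μ m₀) := by omega
      obtain ⟨t₀, ht₀K, ht₀1, ht₀2⟩ := event_exists Q (hpropμ m₀)
      have ht₀ks : t₀ ≤ ks := hevent_le m₀ (μ m₀) t₀ hm₀M ⟨m₀, hm₀M, rfl⟩ ht₀1 ht₀2 ht₀K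
      have hS₀ := event_anatomy Q ht₀1 ht₀2
      rcases lt_or_eq_of_le ht₀ks with hlt | heqt
      · have h1 : (st Q (t₀ + 1)).next m₀ = rkM Q m₀ (μ m₀) + 1 := by
          rw [hS₀.next_eq, Function.update_self, hS₀.hb]
        have h2 : (st Q (t₀ + 1)).next m₀ ≤ (st Q ks).next m₀ :=
          next_mono Q (Nat.succ_le_of_lt hlt) m₀
        rw [h1, ← hSk.hb] at h2
        omega
      · subst heqt
        obtain ⟨-, hbe⟩ := event_unique Q hSk ht₀1 ht₀2
        exact hne' hbe.symm
    subst hw₀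
    -- step (6) : m₀ is accepted by w₀ = μ m₀ at time ks
    have hacc : (st Q (ks + 1)).wmatch (μ m₀) = some m₀ := by
      rcases hSk.outcome with ⟨hw, -⟩ | ⟨c, hc, hw, -, hcne⟩
      · rw [hw, Function.update_self]
      · exfalso
        have hrej : (st Q (ks + 1)).wmatch (μ m₀) ≠ some m₀ := by
          rw [hw]
          intro h
          rw [hc] at h
          exact hcne (by injection h)
        have := reject_persist Q (Nat.succ_le_of_lt hkslt) hp hrej
        exact this (hfinal m₀)
    -- step (7) : the ν-partner of w₀
    have hw₀ν : μ m₀ ∈ ν '' M' := heq ▸ ⟨m₀, hm₀M, rfl⟩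
    obtain ⟨m₂, hm₂M, hm₂⟩ := hw₀ν
    have hm₂m₀ : m₂ ≠ m₀ := by
      rintro rfl
      have := hMrk m₂ hm₂M
      rw [hm₂] at this
      exact lt_irrefl _ this
    -- step (8) : the event when m₂ proposed to w₀
    have hpm₂ : (m₂, μ m₀) ∈ (st Q K).props := by
      rw [hIK.mem_props, hnextK]
      have h1 := hMrk m₂ hm₂M
      rw [hm₂] at h1
      omega
    obtain ⟨t₂, ht₂K, ht₂1, ht₂2⟩ := event_exists Q hpm₂
    have ht₂ks : t₂ ≤ ks := hevent_le m₂ (μ m₀) t₂ hm₂M ⟨m₀, hm₀M, rfl⟩ ht₂1 ht₂2 ht₂K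
    have ht₂lt : t₂ < ks := by
      rcases lt_or_eq_of_le ht₂ks with h | h
      · exact h
      · exfalso
        subst h
        obtain ⟨hae, -⟩ := event_unique Q hSk ht₂1 ht₂2
        exact hm₂m₀ hae
    have hS₂ := event_anatomy Q ht₂1 ht₂2
    have h8 : ∃ c₂, (st Q (t₂ + 1)).wmatch (μ m₀) = some c₂ ∧
        (c₂ = m₂ ∨ Q.wpref (μ m₀) c₂ m₂) := by
      rcases hS₂.outcome with ⟨hw, -⟩ | ⟨c, hc, hw, hnc, hcne⟩
      · exact ⟨m₂, by rw [hw, Function.update_self], Or.inl rfl⟩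
      · refine ⟨c, by rw [hw]; exact hc, Or.inr ?_⟩
        rcases wpref_total Q hcne with h | h
        · exact h
        · exact absurd h hnc
    obtain ⟨c₂, hc₂, hc₂rel⟩ := h8
    -- step (9) : the holder m₁ of w₀ just before time ks
    obtain ⟨m₁, hm₁, hm₁rel⟩ := match_mono Q (Nat.succ_le_of_lt ht₂lt) hc₂
    have hm₁m₂rel : m₁ = m₂ ∨ Q.wpref (μ m₀) m₁ m₂ := by
      rcases hm₁rel with rfl | h1
      · exact hc₂rel
      · rcases hc₂rel with rfl | h2
        · exact Or.inr h1
        · exact Or.inr (wpref_trans Q h1 h2)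
    -- step (10)
    have hm₁m₀ : m₁ ≠ m₀ := by
      intro h
      rw [h] at hm₁
      exact hSk.unmatched (μ m₀) hm₁
    -- step (11)
    have hm₁props : (m₁, μ m₀) ∈ (st Q ks).props := (Inv_st Q ks).holder_mem hm₁
    have hm₁propsK : (m₁, μ m₀) ∈ (st Q K).props :=
      props_mono Q (Nat.le_of_lt hkslt) hm₁props
    -- step (12)
    have hμm₁ : μ m₁ ≠ μ m₀ := fun h => hm₁m₀ (hμinj h)
    have h12 : rkM Q m₁ (μ m₀) < rkM Q m₁ (μ m₁) := by
      have h1 : rkM Q m₁ (μ m₀) < (st Q K).next m₁ := (hIK.mem_props m₁ (μ m₀)).mp hm₁propsK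
      rw [hnextK] at h1
      have h2 : rkM Q m₁ (μ m₀) ≠ rkM Q m₁ (μ m₁) := fun h => hμm₁ (rkM_inj Q h).symm
      omega
    -- step (13) : m₁ ∉ M'
    have hm₁M : m₁ ∉ M' := by
      intro hm₁M
      obtain ⟨t₄, ht₄K, ht₄1, ht₄2⟩ := event_exists Q (hpropμ m₁)
      have ht₄ks : t₄ ≤ ks := hevent_le m₁ (μ m₁) t₄ hm₁M ⟨m₁, hm₁M, rfl⟩ ht₄1 ht₄2 ht₄K
      have hS₄ := event_anatomy Q ht₄1 ht₄2
      rcases lt_or_eq_of_le ht₄ks with hlt | heqt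
      · have h1 : (st Q (t₄ + 1)).next m₁ = rkM Q m₁ (μ m₁) + 1 := by
          rw [hS₄.next_eq, Function.update_self, hS₄.hb]
        have h2 : (st Q (t₄ + 1)).next m₁ ≤ (st Q ks).next m₁ :=
          next_mono Q (Nat.succ_le_of_lt hlt) m₁
        have h3 : rkM Q m₁ (μ m₀) + 1 = (st Q ks).next m₁ :=
          (Inv_st Q ks).holder_rank (μ m₀) m₁ hm₁
        omega
      · subst heqt
        obtain ⟨hae, -⟩ := event_unique Q hSk ht₄1 ht₄2
        exact hm₁m₀ hae
    -- step (14)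
    have h14 : Q.wpref (μ m₀) m₁ m₂ := by
      rcases hm₁m₂rel with rfl | h
      · exact absurd hm₂M hm₁M
      · exact h
    -- step (15)
    have h15 : Q.mpref m₁ (μ m₀) (ν m₁) := by
      have h1 : ¬ rkM Q m₁ (ν m₁) < rkM Q m₁ (μ m₁) := by
        intro h
        exact hm₁M ((mpref_iff Q m₁ (ν m₁) (μ m₁)).mpr h)
      rw [mpref_iff]
      omega
    exact ⟨m₁, μ m₀, hm₁M, h15, m₂, hm₂, h14⟩
  · -- Case 1 : static argument
    obtain ⟨w, hw1, hw2⟩ := Set.not_subset.mp hsub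
    obtain ⟨m', hm'M, hm'⟩ := hw1
    obtain ⟨mh, hmh'⟩ := (DA_bij Q).surjective w
    have hmh : μ mh = w := hmh'
    have hmhM : mh ∉ M' := fun h => hw2 ⟨mh, h, hmh⟩
    have hne' : mh ≠ m' := by
      rintro rfl
      have h0 := (mpref_iff Q mh (ν mh) (μ mh)).mp hm'M
      rw [hm', ← hmh] at h0
      exact lt_irrefl _ h0
    have hmp : Q.mpref m' w (μ m') := hm' ▸ hm'M
    have hnb := (stable_DA Q).2 m' w
    have hwm : ¬ Q.wpref w m' mh := fun hwp => hnb ⟨hmp, mh, hmh, hwp⟩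
    have hwp : Q.wpref w mh m' := by
      rcases wpref_total Q hne' with h | h
      · exact h
      · exact absurd h hwm
    have hνmh : ν mh ≠ w := fun h => hne' (hν (h.trans hm'.symm))
    have h15 : Q.mpref mh w (ν mh) := by
      have h1 : ¬ rkM Q mh (ν mh) < rkM Q mh (μ mh) := by
        intro h
        exact hmhM ((mpref_iff Q mh (ν mh) (μ mh)).mpr h)
      have h2 : rkM Q mh w ≠ rkM Q mh (ν mh) := fun h => hνmh (rkM_inj Q h).symm
      have h3 : rkM Q mh (μ mh) = rkM Q mh w := by rw [hmh]
      rw [mpref_iff]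
      omega
    exact ⟨mh, w, hmhM, h15, m', hm', hwp⟩

/-! ### Strategy-proofness for a single man -/

lemma updateM_M_self (P : Profile n) (m : Fin n) (e : Fin n ≃ Fin n) :
    (P.updateM m e).M m = e := by
  simp [Profile.updateM]

lemma updateM_M_ne (P : Profile n) {m m' : Fin n} (h : m' ≠ m) (e : Fin n ≃ Fin n) :
    (P.updateM m e).M m' = P.M m' := by
  simp [Profile.updateM, Function.update_of_ne h]

theorem DA_strategyproof (Q : Profile n) (m : Fin n) (e : Fin n ≃ Fin n) :
    ¬ Q.mpref m (DA (Q.updateM m e) m) (DA Q m) := by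
  intro h
  set Q' := Q.updateM m e with hQ'
  set ν := DA Q' with hν'
  have hν : Function.Injective ν := DA_inj Q'
  obtain ⟨m1, w0, hm1, hb⟩ := blocking_lemma Q ν hν ⟨m, h⟩
  have hm1m : m1 ≠ m := fun he => hm1 (he ▸ h)
  obtain ⟨hbm, m'', hm'', hbw⟩ := hb
  have hb' : Blocks Q' ν m1 w0 := by
    refine ⟨?_, m'', hm'', ?_⟩
    · unfold Profile.mpref
      rw [hQ', updateM_M_ne Q hm1m]
      exact hbm
    · exact hbw
  exact (stable_DA Q').2 m1 w0 hb'

lemma mem_Above_iff (e : Fin n ≃ Fin n) (w x : Fin n) :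
    x ∈ Above e w ↔ ((e.symm x : ℕ) < (e.symm w : ℕ)) := Iff.rfl

end StableAux
/-- If pushing up the set `X` causes no regret for `m`, then pushing
up each single woman of `X` individually also causes no regret. -/
theorem pushUp_single_noRegret (n : ℕ) (P : Profile n) (m : Fin n)
    (X : Set (Fin n)) (hX : X ⊆ Below (P.M m) (DA P m))
    (e' : Fin n ≃ Fin n) (hpu : PushUp P m X e')
    (hnr : DA (P.updateM m e') m = DA P m) :
    ∀ wx ∈ X, ∀ ex : Fin n ≃ Fin n, PushUp P m {wx} ex →
      DA (P.updateM m ex) m = DA P m := by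
  classical
  intro wx hwx ex hex
  set pivot := DA P m with hpivot
  set P' := P.updateM m e' with hP'
  set Px := P.updateM m ex with hPx
  have hAe' : Above e' pivot = Above (P.M m) pivot ∪ X := by
    have h := hpu
    unfold PushUp PushUpDown at h
    rw [Set.diff_empty] at h
    exact h
  have hAx : Above ex pivot = Above (P.M m) pivot ∪ {wx} := by
    have h := hex
    unfold PushUp PushUpDown at h
    rw [Set.diff_empty] at h
    exact h
  have hsub : Above ex pivot ⊆ Above e' pivot := by
    rw [hAe', hAx]
    exact Set.union_subset_union_right _ (Set.singleton_subset_iff.mpr hwx)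
  have hP'm : P'.M m = e' := StableAux.updateM_M_self P m e'
  have hPxm : Px.M m = ex := StableAux.updateM_M_self P m ex
  have hstab' : Stable P' (DA P') := StableAux.stable_DA P'
  have hm' : DA P' m = pivot := hnr
  -- `DA P'` is also stable with respect to `Px`
  have hstabPx : Stable Px (DA P') := by
    refine ⟨hstab'.1, ?_⟩
    intro m₀ w hb
    obtain ⟨hbm, m'', hm'', hbw⟩ := hb
    rcases eq_or_ne m₀ m with rfl | hne
    · have hmem : w ∈ Above ex pivot := by
        rw [StableAux.mem_Above_iff]
        have h1 : (Px.M m₀).symm w < (Px.M m₀).symm (DA P' m₀) := hbm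
        rw [hPxm, hm'] at h1
        exact h1
      have hmem' : w ∈ Above e' pivot := hsub hmem
      have hbm' : P'.mpref m₀ w (DA P' m₀) := by
        unfold Profile.mpref
        rw [hP'm, hm']
        exact hmem'
      exact hstab'.2 m₀ w ⟨hbm', m'', hm'', hbw⟩
    · have hbm' : P'.mpref m₀ w (DA P' m₀) := by
        unfold Profile.mpref
        rw [hP', StableAux.updateM_M_ne P hne e']
        have h1 : (Px.M m₀).symm w < (Px.M m₀).symm (DA P' m₀) := hbm
        rw [hPx, StableAux.updateM_M_ne P hne ex] at h1
        exact h1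
      exact hstab'.2 m₀ w ⟨hbm', m'', hm'', hbw⟩
  have hopt : StableAux.rkM Px m (DA Px m) ≤ StableAux.rkM Px m (DA P' m) :=
    StableAux.DA_optimal Px hstabPx m
  have hsp : ¬ P'.mpref m (DA (P'.updateM m ex) m) (DA P' m) :=
    StableAux.DA_strategyproof P' m ex
  have hPP : P'.updateM m ex = Px := by
    rw [hP', hPx]
    unfold Profile.updateM
    simp
  rw [hPP, hm'] at hsp
  by_contra hneq
  have hne2 : StableAux.rkM Px m (DA Px m) ≠ StableAux.rkM Px m pivot :=
    fun h => hneq (StableAux.rkM_inj Px h)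
  rw [hm'] at hopt
  have hlt : StableAux.rkM Px m (DA Px m) < StableAux.rkM Px m pivot := by omega
  have hmem : DA Px m ∈ Above ex pivot := by
    rw [StableAux.mem_Above_iff]
    unfold StableAux.rkM at hlt
    rw [hPxm] at hlt
    exact hlt
  have hmem' : DA Px m ∈ Above e' pivot := hsub hmem
  refine hsp ?_
  unfold Profile.mpref
  rw [hP'm]
  exact hmem'
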